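/- Let m' and n be positive integers with n dividing m', neither m' nor n divisible by 3, and let k be an integer with 0 ≤ k ≤ 3m'/n − 1 and 1 + k + k² ≡ 0 (mod 3m'/n). Then k ≡ 1 (mod 3), and there exists an integer k' with 0 ≤ k' ≤ m'/n − 1, k' ≡ k (mod m'/n) and 1 + k' + k'² ≡ 0 (mod m'/n), such that C_{3m',n}^{(k)} is isomorphic to ℤ_3 × C_{m',n}^{(k')}. -/

import Mathlib

open Matrix Complex

noncomputable section

/-- The group `SU(3)`: 3×3 complex unitary matrices of determinant 1. -/
abbrev SU3 : Type := ↥(Matrix.specialUnitaryGroup (Fin 3) ℂ)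

noncomputable instance : Group SU3 :=
  { (inferInstance : Monoid SU3) with
    inv := fun A => ⟨star A.val,
      ⟨Unitary.star_mem A.2.1, by
        have h2 : A.val.det = 1 := A.2.2
        show Matrix.detMonoidHom (star A.val) = 1
        show (star A.val).det = 1
        rw [Matrix.star_eq_conjTranspose, Matrix.det_conjTranspose, h2, star_one]⟩⟩
    inv_mul_cancel := fun A => Subtype.ext A.2.1.1 }

/-- The matrix `E` with rows (0,1,0), (0,0,1), (1,0,0). -/
def EM : Matrix (Fin 3) (Fin 3) ℂ := !![0, 1, 0; 0, 0, 1; 1, 0, 0]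

/-- The matrix `B` with rows (-1,0,0), (0,0,-1), (0,-1,0). -/
def BM : Matrix (Fin 3) (Fin 3) ℂ := !![-1, 0, 0; 0, 0, -1; 0, -1, 0]

/-- `ε = exp(2πi/m)`. -/
def eps (m : ℕ) : ℂ := Complex.exp (2 * Real.pi * Complex.I / m)

/-- The diagonal matrix `F = diag(ε, ε^k, ε^(-k-1))` with `ε = exp(2πi/m)`. -/
def FM (m : ℕ) (k : ℤ) : Matrix (Fin 3) (Fin 3) ℂ :=
  Matrix.diagonal ![eps m, eps m ^ k, eps m ^ (-k - 1)]

/-- The diagonal matrix `G = diag(1, ε^(-r), ε^r)` with `ε = exp(2πi/m)`. -/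
def GM (m r : ℕ) : Matrix (Fin 3) (Fin 3) ℂ :=
  Matrix.diagonal ![1, eps m ^ (-(r : ℤ)), eps m ^ (r : ℤ)]

/-! ### auxiliary lemmas about `eps` -/

lemma eps_ne_zero (m : ℕ) : eps m ≠ 0 := Complex.exp_ne_zero _

lemma eps_pow_self {m : ℕ} (hm : m ≠ 0) : eps m ^ m = 1 := by
  have h1 : (m : ℂ) ≠ 0 := Nat.cast_ne_zero.mpr hm
  rw [eps, ← Complex.exp_nat_mul]
  rw [show (m : ℂ) * (2 * Real.pi * Complex.I / m) = 2 * Real.pi * Complex.I by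
    field_simp]
  exact Complex.exp_two_pi_mul_I

lemma eps_zpow_self {m : ℕ} (hm : m ≠ 0) : eps m ^ (m : ℤ) = 1 := by
  rw [zpow_natCast]; exact eps_pow_self hm

lemma eps_zpow_congr {m : ℕ} (hm : m ≠ 0) {a b : ℤ} (h : (m : ℤ) ∣ a - b) :
    eps m ^ a = eps m ^ b := by
  obtain ⟨t, ht⟩ := h
  have : a = b + (m : ℤ) * t := by linarith
  rw [this, zpow_add₀ (eps_ne_zero m), _root_.zpow_mul, eps_zpow_self hm,
    _root_.one_zpow, mul_one]

lemma eps_zpow_pow_self {m : ℕ} (hm : m ≠ 0) (z : ℤ) : (eps m ^ z) ^ m = 1 := by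
  rw [← zpow_natCast (eps m ^ z), ← _root_.zpow_mul, mul_comm, _root_.zpow_mul,
    eps_zpow_self hm, _root_.one_zpow]

lemma eps_mul_eq_pow {a m : ℕ} (hm : m ≠ 0) (ha : a ≠ 0) : eps m = eps (a * m) ^ (a : ℤ) := by
  rw [zpow_natCast, eps, eps, ← Complex.exp_nat_mul]
  congr 1
  have h1 : (m : ℂ) ≠ 0 := Nat.cast_ne_zero.mpr hm
  have h2 : (a : ℂ) ≠ 0 := Nat.cast_ne_zero.mpr ha
  push_cast
  field_simp

lemma conj_eps (m : ℕ) : (starRingEnd ℂ) (eps m) = (eps m)⁻¹ := by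
  rw [eps, ← Complex.exp_conj, ← Complex.exp_neg]
  congr 1
  simp [map_div₀, Complex.conj_I]
  rw [map_ofNat]
  ring

lemma eps_zpow_eq_one {m : ℕ} (hm : m ≠ 0) {w : ℤ} (h : eps m ^ w = 1) : (m : ℤ) ∣ w := by
  have h1 : eps m ^ w = Complex.exp (w * (2 * Real.pi * Complex.I / m)) := by
    rw [eps, ← Complex.exp_int_mul]
  rw [h1, Complex.exp_eq_one_iff] at h
  obtain ⟨j, hj⟩ := h
  have hmC : (m : ℂ) ≠ 0 := Nat.cast_ne_zero.mpr hm
  have hpi : (Real.pi : ℂ) ≠ 0 := by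
    exact_mod_cast Real.pi_ne_zero
  have h2 : ((w : ℂ) - (m : ℂ) * j) * (2 * Real.pi * Complex.I) = 0 := by
    have hj' := congrArg (fun z => z * (m : ℂ)) hj
    field_simp at hj'
    linear_combination (2 * Real.pi * Complex.I) * hj'
  have h3 : (2 : ℂ) * Real.pi * Complex.I ≠ 0 :=
    mul_ne_zero (mul_ne_zero two_ne_zero hpi) Complex.I_ne_zero
  have h4 : (w : ℂ) = (m : ℂ) * j := by
    have h5 := (mul_eq_zero.mp h2).resolve_right h3
    linear_combination h5
  refine ⟨j, ?_⟩
  exact_mod_cast h4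

/-! ### diagonal eps matrices -/

/-- diagonal matrix with eps-power entries -/
def epsDiag (m : ℕ) (a b c : ℤ) : Matrix (Fin 3) (Fin 3) ℂ :=
  Matrix.diagonal ![eps m ^ a, eps m ^ b, eps m ^ c]

lemma epsDiag_mem {m : ℕ} (hm : m ≠ 0) {a b c : ℤ} (h : (m : ℤ) ∣ a + b + c) :
    epsDiag m a b c ∈ Matrix.specialUnitaryGroup (Fin 3) ℂ := by
  rw [Matrix.mem_specialUnitaryGroup_iff]
  constructor
  · rw [Matrix.mem_unitaryGroup_iff, Matrix.star_eq_conjTranspose, epsDiag,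
      Matrix.diagonal_conjTranspose, Matrix.diagonal_mul_diagonal]
    convert Matrix.diagonal_one using 2
    funext i
    fin_cases i <;>
      simp [Pi.star_apply, Complex.star_def, conj_eps, _root_.inv_zpow,
        mul_inv_cancel₀ (zpow_ne_zero _ (eps_ne_zero m))]
  · rw [epsDiag, Matrix.det_diagonal]
    simp only [Fin.prod_univ_three]
    simp only [Matrix.cons_val_zero, Matrix.cons_val_one, Matrix.head_cons,
      Matrix.cons_val_two, Matrix.tail_cons]
    rw [← zpow_add₀ (eps_ne_zero m), ← zpow_add₀ (eps_ne_zero m)]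
    have := eps_zpow_congr hm (show (m : ℤ) ∣ (a + b + c) - 0 by simpa using h)
    simpa using this

lemma epsDiag_congr {m : ℕ} (hm : m ≠ 0) {a b c a' b' c' : ℤ}
    (h1 : (m : ℤ) ∣ a - a') (h2 : (m : ℤ) ∣ b - b') (h3 : (m : ℤ) ∣ c - c') :
    epsDiag m a b c = epsDiag m a' b' c' := by
  unfold epsDiag
  apply congrArg
  funext i
  fin_cases i <;> simp [eps_zpow_congr hm h1, eps_zpow_congr hm h2, eps_zpow_congr hm h3]

lemma epsDiag_mul {m : ℕ} (a b c a' b' c' : ℤ) :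
    epsDiag m a b c * epsDiag m a' b' c' = epsDiag m (a + a') (b + b') (c + c') := by
  unfold epsDiag
  rw [Matrix.diagonal_mul_diagonal]
  apply congrArg
  funext i
  fin_cases i <;> simp [zpow_add₀ (eps_ne_zero m)]

lemma epsDiag_zero (m : ℕ) : epsDiag m 0 0 0 = 1 := by
  unfold epsDiag
  convert Matrix.diagonal_one using 2
  funext i
  fin_cases i <;> simp

lemma epsDiag_pow {m : ℕ} (a b c : ℤ) (t : ℕ) :
    epsDiag m a b c ^ t = epsDiag m (a * t) (b * t) (c * t) := by
  induction t with
  | zero => simpa using (epsDiag_zero m).symm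
  | succ t ih =>
    rw [pow_succ, ih, epsDiag_mul]
    congr 1 <;> push_cast <;> ring

lemma epsDiag_star {m : ℕ} (a b c : ℤ) :
    star (epsDiag m a b c) = epsDiag m (-a) (-b) (-c) := by
  unfold epsDiag
  rw [Matrix.star_eq_conjTranspose, Matrix.diagonal_conjTranspose]
  apply congrArg
  funext i
  fin_cases i <;>
    simp [Pi.star_apply, Complex.star_def, map_zpow₀, conj_eps, _root_.zpow_neg,
      _root_.inv_zpow]

lemma eps_zpow_scale {m u : ℕ} (hm : m ≠ 0) (hu : u ≠ 0) (z : ℤ) :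
    eps m ^ z = eps (u * m) ^ ((u : ℤ) * z) := by
  rw [eps_mul_eq_pow hm hu, ← _root_.zpow_mul]

lemma epsDiag_scale {m u : ℕ} (hm : m ≠ 0) (hu : u ≠ 0) (a b c : ℤ) :
    epsDiag m a b c = epsDiag (u * m) ((u : ℤ) * a) ((u : ℤ) * b) ((u : ℤ) * c) := by
  unfold epsDiag
  apply congrArg
  funext i
  fin_cases i <;> simp [eps_zpow_scale hm hu]

lemma epsDiag_apply00 {m : ℕ} (a b c : ℤ) : epsDiag m a b c 0 0 = eps m ^ a := by
  unfold epsDiag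
  simp

lemma FM_eq_epsDiag (m : ℕ) (k : ℤ) : FM m k = epsDiag m 1 k (-k - 1) := by
  unfold FM epsDiag
  apply congrArg
  funext i
  fin_cases i <;> simp

lemma GM_eq_epsDiag (m r : ℕ) : GM m r = epsDiag m 0 (-(r : ℤ)) (r : ℤ) := by
  unfold GM epsDiag
  apply congrArg
  funext i
  fin_cases i <;> simp

/-! ### coercion lemmas -/

lemma SU3.coe_mul (A B : SU3) : ((A * B : SU3) : Matrix (Fin 3) (Fin 3) ℂ) = A.val * B.val := rfl

lemma SU3.coe_pow (A : SU3) (t : ℕ) : ((A ^ t : SU3) : Matrix (Fin 3) (Fin 3) ℂ) = A.val ^ t := by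
  induction t with
  | zero => rfl
  | succ t ih => rw [pow_succ, pow_succ, ← ih]; rfl

lemma SU3.coe_inv (A : SU3) : ((A⁻¹ : SU3) : Matrix (Fin 3) (Fin 3) ℂ) = star A.val := rfl

lemma SU3.epsDiag_zpow {m : ℕ} {A : SU3} {a b c : ℤ} (h : A.val = epsDiag m a b c) (z : ℤ) :
    ((A ^ z : SU3) : Matrix (Fin 3) (Fin 3) ℂ) = epsDiag m (a * z) (b * z) (c * z) := by
  cases z with
  | ofNat t =>
    rw [Int.ofNat_eq_coe, zpow_natCast, SU3.coe_pow, h, epsDiag_pow]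
  | negSucc t =>
    rw [zpow_negSucc, SU3.coe_inv, SU3.coe_pow, h, epsDiag_pow, epsDiag_star]
    simp only [Int.negSucc_eq]
    congr 1 <;> push_cast <;> ring

/-! ### monomial matrices -/

/-- monomial matrix with entries that are N-th roots of unity -/
def IsMono (N : ℕ) (A : Matrix (Fin 3) (Fin 3) ℂ) : Prop :=
  ∃ σ : Equiv.Perm (Fin 3), ∃ d : Fin 3 → ℂ, (∀ j, d j ^ N = 1) ∧
    ∀ i j, A i j = if i = σ j then d j else 0

def MonoSub (N : ℕ) : Subgroup SU3 where
  carrier := {A : SU3 | IsMono N A.val}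
  one_mem' := ⟨1, 1, fun _ => one_pow N, by
    intro i j
    simp [Matrix.one_apply]
    split_ifs <;> simp_all⟩
  mul_mem' := by
    rintro A B ⟨σ, d, hd, hA⟩ ⟨τ, e, he, hB⟩
    refine ⟨σ * τ, fun j => d (τ j) * e j, fun j => by rw [mul_pow, hd, he, one_mul], ?_⟩
    intro i j
    rw [SU3.coe_mul, Matrix.mul_apply]
    rw [Finset.sum_eq_single (τ j)]
    · rw [hA, hB, if_pos rfl, Equiv.Perm.mul_apply]
      by_cases h : i = σ (τ j) <;> simp [h]
    · intro l _ hl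
      rw [hB, if_neg (by exact fun hc => hl hc), mul_zero]
    · intro h; exact absurd (Finset.mem_univ _) h
  inv_mem' := by
    rintro A ⟨σ, d, hd, hA⟩
    refine ⟨σ⁻¹, fun j => (starRingEnd ℂ) (d (σ⁻¹ j)), fun j => by
      rw [← map_pow, hd, _root_.map_one], ?_⟩
    intro i j
    rw [SU3.coe_inv, Matrix.star_eq_conjTranspose, Matrix.conjTranspose_apply, hA]
    by_cases h : i = σ⁻¹ j
    · rw [if_pos h, if_pos (by rw [h]; exact (Equiv.apply_symm_apply σ j).symm)]
      simp [h]
    · rw [if_neg h, if_neg (fun hc => h (by rw [hc]; exact (Equiv.symm_apply_apply σ i).symm))]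
      simp
theorem statement17 (m' n : ℕ) (hm' : 0 < m') (hn : 0 < n) (hnm : n ∣ m')
    (h3m : ¬ 3 ∣ m') (h3n : ¬ 3 ∣ n)
    (k : ℤ) (hk0 : 0 ≤ k) (hkr : k ≤ ((3 * m' / n : ℕ) : ℤ) - 1)
    (hc : ((3 * m' / n : ℕ) : ℤ) ∣ 1 + k + k ^ 2)
    (E F G : SU3)
    (hE : (E : Matrix (Fin 3) (Fin 3) ℂ) = EM)
    (hF : (F : Matrix (Fin 3) (Fin 3) ℂ) = FM (3 * m') k)
    (hG : (G : Matrix (Fin 3) (Fin 3) ℂ) = GM (3 * m') (3 * m' / n)) :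
    k % 3 = 1 ∧
    ∃ k' : ℤ, 0 ≤ k' ∧ k' ≤ ((m' / n : ℕ) : ℤ) - 1 ∧
      k' % ((m' / n : ℕ) : ℤ) = k % ((m' / n : ℕ) : ℤ) ∧
      ((m' / n : ℕ) : ℤ) ∣ 1 + k' + k' ^ 2 ∧
      ∃ F' G' : SU3,
        (F' : Matrix (Fin 3) (Fin 3) ℂ) = FM m' k' ∧
        (G' : Matrix (Fin 3) (Fin 3) ℂ) = GM m' (m' / n) ∧
        Nonempty ((Subgroup.closure ({E, F, G} : Set SU3)) ≃*
          Multiplicative (ZMod 3) × (Subgroup.closure ({E, F', G'} : Set SU3))) := by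
  have hmne : m' ≠ 0 := hm'.ne'
  have hm3 : (3 * m' : ℕ) ≠ 0 := by omega
  set r : ℕ := m' / n with hrdef
  have hr : 0 < r := Nat.div_pos (Nat.le_of_dvd hm' hnm) hn
  have hr3 : 3 * m' / n = 3 * r := Nat.mul_div_assoc 3 hnm
  have hnr : m' = n * r := (Nat.mul_div_cancel' hnm).symm
  have hnrZ : (m' : ℤ) = (n : ℤ) * r := by exact_mod_cast congrArg (Nat.cast : ℕ → ℤ) hnr
  have hrZ : (0 : ℤ) < (r : ℤ) := by exact_mod_cast hr
  have hcast : ((3 * m' / n : ℕ) : ℤ) = 3 * (r : ℤ) := by rw [hr3]; push_cast; ring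
  rw [hcast] at hc hkr
  -- k % 3 = 1
  have h3dvd : (3 : ℤ) ∣ 1 + k + k ^ 2 := dvd_trans ⟨(r : ℤ), by ring⟩ hc
  have hk3 : k % 3 = 1 := by
    have hu0 : 0 ≤ k % 3 := Int.emod_nonneg k (by norm_num)
    have hu3 : k % 3 < 3 := Int.emod_lt_of_pos k (by norm_num)
    have h2 : (3 : ℤ) ∣ 1 + (k % 3) + (k % 3) ^ 2 := by
      have h4 : 1 + (k % 3) + (k % 3) ^ 2 =
          (1 + k + k ^ 2) - (k - k % 3) * (k + k % 3 + 1) := by ring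
      have hq : k - k % 3 = 3 * (k / 3) := by omega
      have h5 : (3 : ℤ) ∣ (k - k % 3) * (k + k % 3 + 1) :=
        ⟨(k / 3) * (k + k % 3 + 1), by rw [hq]; ring⟩
      rw [h4]; exact dvd_sub h3dvd h5
    have : k % 3 = 0 ∨ k % 3 = 1 ∨ k % 3 = 2 := by omega
    rcases this with h | h | h
    · rw [h] at h2; norm_num at h2
    · exact h
    · rw [h] at h2; norm_num at h2
  -- k', t, s
  set k' : ℤ := k % (r : ℤ) with hk'def
  have hk'0 : 0 ≤ k' := Int.emod_nonneg k hrZ.ne'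
  have hk'lt : k' < (r : ℤ) := Int.emod_lt_of_pos k hrZ
  set t : ℤ := k / (r : ℤ) with htdef
  have hkt : k = (r : ℤ) * t + k' := by
    rw [hk'def, htdef]; linarith [Int.mul_ediv_add_emod k (r : ℤ)]
  have ht0 : 0 ≤ t := Int.ediv_nonneg hk0 hrZ.le
  set s : ℤ := k / 3 with hsdef
  have hsk : k = 3 * s + 1 := by rw [hsdef]; omega
  have hrdvd : (r : ℤ) ∣ 1 + k' + k' ^ 2 := by
    have h4 : 1 + k' + k' ^ 2 = (1 + k + k ^ 2) - (k - k') * (k + k' + 1) := by ring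
    have h5 : (r : ℤ) ∣ (k - k') * (k + k' + 1) :=
      ⟨t * (k + k' + 1), by rw [show k - k' = (r : ℤ) * t by linarith [hkt]]; ring⟩
    rw [h4]; exact dvd_sub (dvd_trans ⟨3, by ring⟩ hc) h5
  -- Bezout
  have hcop3m : Nat.Coprime 3 m' := (Nat.Prime.coprime_iff_not_dvd (by norm_num)).mpr h3m
  set c₀ : ℤ := Nat.gcdA 3 m' with hc₀def
  set a₀ : ℤ := Nat.gcdB 3 m' with ha₀def
  have hbz : 3 * c₀ + (m' : ℤ) * a₀ = 1 := by
    have hbez := Nat.gcd_eq_gcd_ab 3 m'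
    rw [Nat.Coprime] at hcop3m
    rw [hcop3m] at hbez
    push_cast at hbez
    linarith
  -- the auxiliary integer dd
  have hrX : (r : ℤ) ∣ (c₀ * (k' - 1) - s) := by
    have hkey : 3 * (c₀ * (k' - 1) - s) = -(r : ℤ) * (t + n * a₀ * (k' - 1)) := by
      linear_combination (k' - 1) * hbz - a₀ * (k' - 1) * hnrZ + hsk - hkt
    have h3r : IsCoprime ((r : ℤ)) 3 := by
      rw [Int.isCoprime_iff_gcd_eq_one]
      have hnc : Nat.Coprime r 3 := Nat.Coprime.symm
        ((Nat.Prime.coprime_iff_not_dvd (by norm_num)).mpr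
          (fun hdvd => h3m (hdvd.trans ⟨n, by rw [hnr]; ring⟩)))
      have : Int.gcd ((r : ℕ) : ℤ) ((3 : ℕ) : ℤ) = 1 := by
        rw [Int.gcd_natCast_natCast]; exact hnc
      simpa using this
    exact h3r.dvd_of_dvd_mul_left ⟨-(t + n * a₀ * (k' - 1)), by linear_combination hkey⟩
  obtain ⟨dd, hdd⟩ := hrX
  -- group elements
  have hF'mem : FM m' k' ∈ Matrix.specialUnitaryGroup (Fin 3) ℂ := by
    rw [FM_eq_epsDiag]; exact epsDiag_mem hmne ⟨0, by ring⟩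
  have hG'mem : GM m' r ∈ Matrix.specialUnitaryGroup (Fin 3) ℂ := by
    rw [GM_eq_epsDiag]; exact epsDiag_mem hmne ⟨0, by ring⟩
  set F' : SU3 := ⟨FM m' k', hF'mem⟩ with hF'def
  set G' : SU3 := ⟨GM m' r, hG'mem⟩ with hG'def
  set W : SU3 := ⟨epsDiag (3 * m') (m' : ℤ) (m' : ℤ) (m' : ℤ),
    epsDiag_mem hm3 ⟨1, by push_cast; ring⟩⟩ with hWdef
  have hWval : W.val = epsDiag (3 * m') (m' : ℤ) (m' : ℤ) (m' : ℤ) := rfl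
  have hFval : F.val = epsDiag (3 * m') 1 k (-k - 1) := by rw [hF, FM_eq_epsDiag]
  have hGval : G.val = epsDiag (3 * m') 0 (-(3 * (r : ℤ))) (3 * (r : ℤ)) := by
    rw [hG, GM_eq_epsDiag, hr3]
    congr 1 <;> push_cast <;> ring
  have hF'val : F'.val = epsDiag (3 * m') 3 (3 * k') (3 * (-k' - 1)) := by
    show FM m' k' = _
    rw [FM_eq_epsDiag, epsDiag_scale hmne (by norm_num : (3 : ℕ) ≠ 0)]
    congr 1 <;> push_cast <;> ring
  have hG'val : G'.val = epsDiag (3 * m') 0 (-(3 * (r : ℤ))) (3 * (r : ℤ)) := by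
    show GM m' r = _
    rw [GM_eq_epsDiag, epsDiag_scale hmne (by norm_num : (3 : ℕ) ≠ 0)]
    congr 1 <;> push_cast <;> ring
  have hG'G : G' = G := Subtype.ext (hG'val.trans hGval.symm)
  -- W has order 3
  have hW3 : W ^ 3 = 1 := by
    apply Subtype.ext
    rw [SU3.coe_pow, hWval, epsDiag_pow]
    show _ = (1 : Matrix (Fin 3) (Fin 3) ℂ)
    rw [← epsDiag_zero (3 * m')]
    exact epsDiag_congr hm3 ⟨1, by push_cast; ring⟩ ⟨1, by push_cast; ring⟩
      ⟨1, by push_cast; ring⟩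
  have hWne : W ≠ 1 := by
    intro hW
    have h00 := congrArg (fun A : SU3 => A.val 0 0) hW
    simp only [hWval, epsDiag_apply00] at h00
    have h01 : eps (3 * m') ^ ((m' : ℕ) : ℤ) = 1 := by
      rw [h00]; exact Matrix.one_apply_eq 0
    have hdv : ((3 * m' : ℕ) : ℤ) ∣ ((m' : ℕ) : ℤ) := eps_zpow_eq_one hm3 h01
    have hle := Int.le_of_dvd (by exact_mod_cast hm') hdv
    push_cast at hle; omega
  haveI : Fact (Nat.Prime 3) := ⟨by norm_num⟩
  have horder : orderOf W = 3 := orderOf_eq_prime hW3 hWne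
  -- subgroups
  set BIG := Subgroup.closure ({E, F, G} : Set SU3) with hBIGdef
  set H := Subgroup.closure ({E, F', G'} : Set SU3) with hHdef
  set M := Subgroup.zpowers W with hMdef
  -- W is central
  have hWcent : ∀ g : SU3, Commute W g := by
    intro g
    have hsc : W.val = (eps (3 * m') ^ ((m' : ℕ) : ℤ)) • (1 : Matrix (Fin 3) (Fin 3) ℂ) := by
      rw [hWval]
      unfold epsDiag
      rw [← Matrix.diagonal_one, ← Matrix.diagonal_smul]
      apply congrArg
      funext i
      fin_cases i <;> simp
    show W * g = g * W
    apply Subtype.ext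
    rw [SU3.coe_mul, SU3.coe_mul, hsc, smul_mul_assoc, mul_smul_comm, one_mul, mul_one]
  -- memberships
  have hEbig : E ∈ BIG := Subgroup.subset_closure (by simp)
  have hFbig : F ∈ BIG := Subgroup.subset_closure (by simp)
  have hGbig : G ∈ BIG := Subgroup.subset_closure (by simp)
  have hEH : E ∈ H := Subgroup.subset_closure (by simp)
  have hF'H : F' ∈ H := Subgroup.subset_closure (by simp)
  have hG'H : G' ∈ H := Subgroup.subset_closure (by simp)
  have hWbig : W ∈ BIG := by
    have hFm : F ^ m' = W := by
      apply Subtype.ext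
      rw [SU3.coe_pow, hFval, epsDiag_pow, hWval]
      refine epsDiag_congr hm3 ⟨0, by push_cast; ring⟩
        ⟨s, by push_cast; linear_combination (m' : ℤ) * hsk⟩
        ⟨-(s + 1), by push_cast; linear_combination -(m' : ℤ) * hsk⟩
    rw [← hFm]; exact pow_mem hFbig m'
  have hF'big : F' ∈ BIG := by
    have hdec : F ^ (3 : ℕ) * G ^ t.toNat = F' := by
      apply Subtype.ext
      rw [SU3.coe_mul, SU3.coe_pow, SU3.coe_pow, hFval, hGval, epsDiag_pow, epsDiag_pow,
        epsDiag_mul, hF'val]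
      have htn : ((t.toNat : ℕ) : ℤ) = t := Int.toNat_of_nonneg ht0
      refine epsDiag_congr hm3 ⟨0, by push_cast [htn]; ring⟩
        ⟨0, by push_cast [htn]; linear_combination 3 * hkt⟩
        ⟨0, by push_cast [htn]; linear_combination -3 * hkt⟩
    rw [← hdec]; exact mul_mem (pow_mem hFbig 3) (pow_mem hGbig t.toNat)
  have hFsup : F ∈ M ⊔ H := by
    have hdec : W ^ a₀ * F' ^ c₀ * G' ^ dd = F := by
      apply Subtype.ext
      rw [SU3.coe_mul, SU3.coe_mul, SU3.epsDiag_zpow hWval a₀, SU3.epsDiag_zpow hF'val c₀,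
        SU3.epsDiag_zpow hG'val dd, epsDiag_mul, epsDiag_mul, hFval]
      refine epsDiag_congr hm3 ⟨0, by push_cast; linear_combination hbz⟩
        ⟨0, by push_cast; linear_combination hbz + 3 * hdd - hsk⟩
        ⟨a₀, by push_cast; linear_combination -2 * hbz - 3 * hdd + hsk⟩
    rw [← hdec]
    exact mul_mem (mul_mem (Subgroup.mem_sup_left (zpow_mem (Subgroup.mem_zpowers W) a₀))
      (Subgroup.mem_sup_right (zpow_mem hF'H c₀))) (Subgroup.mem_sup_right (zpow_mem hG'H dd))
  have hsup : BIG = M ⊔ H := by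
    apply le_antisymm
    · rw [hBIGdef, Subgroup.closure_le]
      rintro x hx
      rcases hx with rfl | rfl | rfl
      · exact Subgroup.mem_sup_right hEH
      · exact hFsup
      · rw [← hG'G]; exact Subgroup.mem_sup_right hG'H
    · rw [sup_le_iff]
      constructor
      · rw [hMdef, Subgroup.zpowers_le]; exact hWbig
      · rw [hHdef, Subgroup.closure_le]
        rintro x hx
        rcases hx with rfl | rfl | rfl
        · exact hEbig
        · exact hF'big
        · rw [hG'G]; exact hGbig
  -- H consists of monomial matrices
  have hmonoDiag : ∀ a b c : ℤ, IsMono m' (epsDiag m' a b c) := by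
    intro a b c
    refine ⟨1, ![eps m' ^ a, eps m' ^ b, eps m' ^ c], ?_, ?_⟩
    · intro j; fin_cases j <;> simp [eps_zpow_pow_self hmne]
    · intro i j
      show Matrix.diagonal _ i j = _
      rw [Matrix.diagonal_apply]
      simp only [Equiv.Perm.coe_one, id_eq]
      by_cases hij : i = j
      · subst hij; simp
      · simp [hij]
  have hHmono : H ≤ MonoSub m' := by
    rw [hHdef, Subgroup.closure_le]
    rintro x hx
    rcases hx with rfl | rfl | rfl
    · refine ⟨Equiv.mk (fun j => ![2, 0, 1] j) (fun j => ![1, 2, 0] j) (by decide) (by decide),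
        fun _ => 1, fun _ => one_pow _, ?_⟩
      intro i j
      rw [hE]
      fin_cases i <;> fin_cases j <;>
        simp [EM, Equiv.coe_fn_mk, Matrix.cons_val_zero, Matrix.cons_val_one, Matrix.head_cons,
          Matrix.cons_val_two, Matrix.tail_cons, Matrix.vecHead, Matrix.vecTail]
    · show IsMono m' F'.val
      show IsMono m' (FM m' k')
      rw [FM_eq_epsDiag]; exact hmonoDiag _ _ _
    · show IsMono m' G'.val
      show IsMono m' (GM m' r)
      rw [GM_eq_epsDiag]; exact hmonoDiag _ _ _
  -- disjointness
  have hdisj : ∀ x : SU3, x ∈ M → x ∈ H → x = 1 := by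
    intro x hxM hxH
    obtain ⟨z, hz⟩ := Subgroup.mem_zpowers_iff.mp hxM
    obtain ⟨σ, d, hd, hA⟩ := hHmono hxH
    have hxval : x.val = epsDiag (3 * m') ((m' : ℤ) * z) ((m' : ℤ) * z) ((m' : ℤ) * z) := by
      rw [← hz]; exact SU3.epsDiag_zpow hWval z
    have h00 := hA 0 0
    rw [hxval, epsDiag_apply00] at h00
    by_cases h0 : (0 : Fin 3) = σ 0
    · rw [if_pos h0] at h00
      have hone := hd 0
      rw [← h00] at hone
      have h1 : eps (3 * m') ^ (((m' : ℤ) * z) * (m' : ℕ)) = 1 := by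
        rw [_root_.zpow_mul, zpow_natCast]; exact hone
      have h2 : ((3 * m' : ℕ) : ℤ) ∣ ((m' : ℤ) * z) * (m' : ℕ) := eps_zpow_eq_one hm3 h1
      obtain ⟨q, hq⟩ := h2
      have hm'Z : (m' : ℤ) ≠ 0 := by exact_mod_cast hmne
      have h3 : z * (m' : ℤ) = 3 * q := by
        apply mul_left_cancel₀ hm'Z
        push_cast at hq ⊢
        linear_combination hq
      have h5 : (3 : ℤ) ∣ z := by
        rcases (Int.Prime.dvd_mul' (by norm_num) ⟨q, h3⟩) with h | h
        · exact h
        · exfalso; apply h3m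
          have : ((3 : ℕ) : ℤ) ∣ ((m' : ℕ) : ℤ) := by exact_mod_cast h
          exact_mod_cast this
      obtain ⟨zq, hzq⟩ := h5
      have hWz : W ^ z = 1 := by
        rw [hzq]
        have : W ^ ((3 : ℤ) * zq) = (W ^ (3 : ℕ)) ^ zq := by
          rw [← zpow_natCast W 3, ← _root_.zpow_mul]; norm_num
        rw [this, hW3, _root_.one_zpow]
      rw [← hz, hWz]
    · rw [if_neg h0] at h00
      exact absurd h00 (zpow_ne_zero _ (eps_ne_zero _))
  -- cardinalities
  have hMcard : Nat.card M = 3 := by rw [hMdef, Nat.card_zpowers, horder]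
  have hZcard : Nat.card (Multiplicative (ZMod 3)) = 3 := by
    simp [Nat.card_eq_fintype_card]
  -- the homomorphism
  have hcomm : ∀ (x : M) (y : H), Commute (M.subtype x) (H.subtype y) := by
    intro x y
    obtain ⟨z, hz⟩ := Subgroup.mem_zpowers_iff.mp x.2
    have hcw : Commute W (H.subtype y) := hWcent _
    have := hcw.zpow_left z
    rw [hz] at this
    exact this
  set ψ : M × H →* SU3 := MonoidHom.noncommCoprod M.subtype H.subtype hcomm with hψdef
  have hinj : Function.Injective ψ := by
    rw [injective_iff_map_eq_one]
    rintro ⟨x, y⟩ hxy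
    have hxy' : (x : SU3) * (y : SU3) = 1 := hxy
    have hx : (x : SU3) = (y : SU3)⁻¹ := eq_inv_of_mul_eq_one_left hxy'
    have hxH : (x : SU3) ∈ H := hx ▸ inv_mem y.2
    have hx1 : (x : SU3) = 1 := hdisj _ x.2 hxH
    have hy1 : (y : SU3) = 1 := by
      rw [hx1, one_mul] at hxy'; exact hxy'
    exact Prod.ext (Subtype.ext hx1) (Subtype.ext hy1)
  have hrange : ψ.range = BIG := by
    rw [hsup]
    apply le_antisymm
    · rintro x ⟨⟨u, v⟩, rfl⟩
      exact mul_mem (Subgroup.mem_sup_left u.2) (Subgroup.mem_sup_right v.2)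
    · rw [sup_le_iff]
      constructor
      · intro x hx
        exact ⟨(⟨x, hx⟩, 1), by simp [hψdef]⟩
      · intro x hx
        exact ⟨(1, ⟨x, hx⟩), by simp [hψdef]⟩
  have e3 : M ≃* Multiplicative (ZMod 3) := mulEquivOfPrimeCardEq hMcard hZcard
  have hk'le : k' ≤ (r : ℤ) - 1 := by linarith [hk'lt]
  have hk'mod : k' % (r : ℤ) = k % (r : ℤ) := by
    rw [hk'def]
    exact Int.emod_emod_of_dvd k dvd_rfl
  refine ⟨hk3, k', hk'0, hk'le, hk'mod, hrdvd, F', G', rfl, rfl, ?_⟩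
  exact ⟨((MonoidHom.ofInjective hinj).trans (MulEquiv.subgroupCongr hrange)).symm.trans
    (e3.prodCongr (MulEquiv.refl H))⟩

end
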